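/- Let X be a partially ordered vector space, B a base of the cone X₊, and f: X → ℝ the strictly positive linear functional with B = {x ∈ X₊ : f(x) = 1}. Then B is order closed if and only if f is order continuous. -/

import Mathlib

/-- A net decreases to `x`: antitone with infimum `x`. -/
def DecrTo {ι X : Type*} [Preorder ι] [Preorder X] (f : ι → X) (x : X) : Prop :=
  Antitone f ∧ IsGLB (Set.range f) x

/-- `M` is a net catching set for `x`. -/
def NetCatchingSetFor {X : Type*} [AddCommGroup X] [PartialOrder X] [IsOrderedAddMonoid X] (M : Set X) (x : X) : Prop :=
  ∀ (ι : Type) [Preorder ι], Nonempty ι → Directed (· ≤ ·) (id : ι → ι) →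
    ∀ f : ι → X, DecrTo f 0 → ∃ α : ι, Set.Icc (x - f α) (x + f α) ⊆ M

/-- `O` is order open. -/
def OrderOpen {X : Type*} [AddCommGroup X] [PartialOrder X] [IsOrderedAddMonoid X] (O : Set X) : Prop :=
  ∀ x ∈ O, NetCatchingSetFor O x

/-- `C` is order closed: its complement is order open. -/
def OrderClosed {X : Type*} [AddCommGroup X] [PartialOrder X] [IsOrderedAddMonoid X] (C : Set X) : Prop :=
  OrderOpen Cᶜ

/-- `B` is a base of the cone `X₊`: non-empty, convex, contained in
`X₊ \ {0}`, and every nonzero positive `x` is uniquely `λ • b`, `λ > 0`, `b ∈ B`. -/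
def IsBase {X : Type*} [AddCommGroup X] [PartialOrder X] [IsOrderedAddMonoid X] [Module ℝ X] (B : Set X) : Prop :=
  B.Nonempty ∧ Convex ℝ B ∧ B ⊆ {x : X | 0 ≤ x ∧ x ≠ 0} ∧
    ∀ x : X, 0 ≤ x → x ≠ 0 →
      ∃! p : ℝ × X, 0 < p.1 ∧ p.2 ∈ B ∧ x = p.1 • p.2

/-- Given the base `B = {x ∈ X₊ : f x = 1}` for a strictly positive linear
functional `f`, `B` is order closed iff `f` is order continuous (continuous
from the order topology into `ℝ`). -/
theorem stmt7 {X : Type*} [AddCommGroup X] [PartialOrder X] [IsOrderedAddMonoid X] [Module ℝ X] [PosSMulStrictMono ℝ X]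
    (B : Set X) (f : X →ₗ[ℝ] ℝ)
    (hf : ∀ x : X, 0 < x → 0 < f x)
    (hB : IsBase B) (hBf : B = {x : X | 0 ≤ x ∧ f x = 1}) :
    OrderClosed B ↔ ∀ U : Set ℝ, IsOpen U → OrderOpen (f ⁻¹' U) := by
  have fnonneg : ∀ v : X, 0 ≤ v → 0 ≤ f v := by
    intro v hv
    rcases hv.eq_or_lt with h | h
    · simp [← h]
    · exact (hf v h).le
  have fmono : ∀ u z : X, u ≤ z → f u ≤ f z := by
    intro u z h
    have := fnonneg (z - u) (sub_nonneg.mpr h)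
    simp only [map_sub] at this
    linarith
  constructor
  · -- B order closed → f order continuous
    intro hcl U hU
    intro x hx ι _ hne hdir g hg
    obtain ⟨ε, hε, hball⟩ := Metric.isOpen_iff.mp hU (f x) hx
    have gnonneg : ∀ α, 0 ≤ g α := fun α => hg.2.1 ⟨α, rfl⟩
    -- the infimum of f ∘ g is 0
    set c : ℝ := sInf (Set.range fun α => f (g α)) with hc
    have hrne : (Set.range fun α => f (g α)).Nonempty := Set.range_nonempty _
    have hbdd : BddBelow (Set.range fun α => f (g α)) := by
      refine ⟨0, ?_⟩
      rintro t ⟨α, rfl⟩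
      exact fnonneg _ (gnonneg α)
    have hc0 : 0 ≤ c := le_csInf hrne (by rintro t ⟨α, rfl⟩; exact fnonneg _ (gnonneg α))
    have hcle : ∀ α, c ≤ f (g α) := fun α => csInf_le hbdd ⟨α, rfl⟩
    have hczero : c = 0 := by
      by_contra hne0
      have hcpos : 0 < c := lt_of_le_of_ne hc0 (Ne.symm hne0)
      -- scaled net
      set h : ι → X := fun α => c⁻¹ • g α with hh
      have hinv : (0:ℝ) < c⁻¹ := inv_pos.mpr hcpos
      have hanti : Antitone h := fun a b hab =>
        smul_le_smul_of_nonneg_left (hg.1 hab) hinv.le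
      have hglb : IsGLB (Set.range h) 0 := by
        constructor
        · rintro t ⟨α, rfl⟩
          exact smul_nonneg hinv.le (gnonneg α)
        · intro y hy
          have hlb : c • y ∈ lowerBounds (Set.range g) := by
            rintro t ⟨α, rfl⟩
            have := hy ⟨α, rfl⟩
            have h2 : c • y ≤ c • (c⁻¹ • g α) :=
              smul_le_smul_of_nonneg_left this hcpos.le
            rwa [smul_inv_smul₀ hcpos.ne'] at h2
          have hcy : c • y ≤ 0 := hg.2.2 hlb
          have : c⁻¹ • (c • y) ≤ c⁻¹ • (0 : X) :=
            smul_le_smul_of_nonneg_left hcy hinv.le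
          rwa [inv_smul_smul₀ hcpos.ne', smul_zero] at this
      have h0B : (0 : X) ∈ Bᶜ := by
        intro h0
        rw [hBf] at h0
        simpa using h0.2
      obtain ⟨α, hα⟩ := hcl 0 h0B ι hne hdir h ⟨hanti, hglb⟩
      -- but (f (g α))⁻¹ • g α ∈ B and in the interval
      set k : ℝ := f (g α) with hk
      have hkpos : 0 < k := lt_of_lt_of_le hcpos (hcle α)
      set b : X := k⁻¹ • g α with hb
      have hbnn : 0 ≤ b := smul_nonneg (inv_pos.mpr hkpos).le (gnonneg α)
      have hbB : b ∈ B := by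
        rw [hBf]
        refine ⟨hbnn, ?_⟩
        simpa [hb, hk, map_smul] using inv_mul_cancel₀ hkpos.ne'
      have hble : b ≤ h α := by
        have hsc : (0:ℝ) ≤ c⁻¹ - k⁻¹ := by
          have : k⁻¹ ≤ c⁻¹ := by
            apply inv_anti₀ hcpos (hcle α)
          linarith
        have : 0 ≤ (c⁻¹ - k⁻¹) • g α := smul_nonneg hsc (gnonneg α)
        rw [sub_smul] at this
        have := sub_nonneg.mp this
        simpa [hb, hh] using this
      have hmem : b ∈ Set.Icc ((0:X) - h α) (0 + h α) := by
        constructor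
        · rw [zero_sub]
          exact le_trans (neg_nonpos.mpr (le_trans hbnn hble)) hbnn
        · rw [zero_add]; exact hble
      exact hα hmem hbB
    -- now find α with f (g α) < ε
    have : sInf (Set.range fun α => f (g α)) < ε := by rw [← hc, hczero]; exact hε
    obtain ⟨t, ⟨α, rfl⟩, hlt⟩ := exists_lt_of_csInf_lt hrne this
    refine ⟨α, ?_⟩
    intro z hz
    apply hball
    rw [Metric.mem_ball, Real.dist_eq, abs_lt]
    have h1 : f (x - g α) ≤ f z := fmono _ _ hz.1
    have h2 : f z ≤ f (x + g α) := fmono _ _ hz.2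
    simp only [map_sub, map_add] at h1 h2
    constructor <;> linarith
  · -- f order continuous → B order closed
    intro hoc
    intro y hy ι _ hne hdir g hg
    by_cases hfy : f y = 1
    · -- then ¬ 0 ≤ y
      have hny : ¬ 0 ≤ y := by
        intro h0y
        exact hy (hBf ▸ ⟨h0y, hfy⟩)
      by_contra hcon
      push_neg at hcon
      -- for each α, some z in the interval belongs to B
      have hz : ∀ α, ∃ z, z ∈ Set.Icc (y - g α) (y + g α) ∧ z ∈ B := by
        intro α
        obtain ⟨z, hz1, hz2⟩ := Set.not_subset.mp (hcon α)
        exact ⟨z, hz1, not_not.mp hz2⟩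
      -- so 0 ≤ y + g α for all α
      have hpos : ∀ α, (0:X) ≤ y + g α := by
        intro α
        obtain ⟨z, hz1, hz2⟩ := hz α
        have : 0 ≤ z := (hBf ▸ hz2 : z ∈ {x : X | 0 ≤ x ∧ f x = 1}).1
        exact le_trans this hz1.2
      -- y is the GLB of the translated net, hence 0 ≤ y
      have hglb : IsGLB (Set.range fun α => y + g α) y := by
        constructor
        · rintro t ⟨α, rfl⟩
          exact le_add_of_nonneg_right (hg.2.1 ⟨α, rfl⟩)
        · intro t ht
          have : t - y ∈ lowerBounds (Set.range g) := by
            rintro s ⟨α, rfl⟩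
            exact sub_le_iff_le_add'.mpr (ht ⟨α, rfl⟩)
          exact sub_nonpos.mp (hg.2.2 this)
      exact hny (hglb.2 (by rintro t ⟨α, rfl⟩; exact hpos α))
    · -- f y ≠ 1 : use order continuity with U = {t | t ≠ 1}
      have hU : IsOpen {t : ℝ | t ≠ 1} := isOpen_ne
      have hyU : y ∈ f ⁻¹' {t : ℝ | t ≠ 1} := hfy
      obtain ⟨α, hα⟩ := hoc _ hU y hyU ι hne hdir g hg
      refine ⟨α, fun z hzmem hzB => ?_⟩
      have : f z ≠ 1 := hα hzmem
      exact this (hBf ▸ hzB : z ∈ {x : X | 0 ≤ x ∧ f x = 1}).2
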